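/- Let h ∈ (0,∞), let N ∈ ℕ with N ≥ 1, set T = N·h, and let λ ∈ (0,∞). Then ∫_0^T ( e^{-2λs} - e^{-2λ·⌈s⌉_h} ) ds = ( (1 - e^{-2λT}) / (1 - e^{-2λh}) ) · ∫_0^h ( e^{-2λs} - e^{-2λh} ) ds. -/

import Mathlib

open MeasureTheory

lemma aux_anti (lam : ℝ) (hlam : 0 < lam) (a b : ℝ) :
    ∫ s in a..b, Real.exp (-2*lam*s)
      = (Real.exp (-2*lam*a) - Real.exp (-2*lam*b)) / (2*lam) := by
  have hd : ∀ x : ℝ, HasDerivAt (fun s => -Real.exp (-2*lam*s)/(2*lam))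
      (Real.exp (-2*lam*x)) x := by
    intro x
    have h1 : HasDerivAt (fun s : ℝ => -2*lam*s) (-2*lam) x := by
      simpa using (hasDerivAt_id x).const_mul (-2*lam)
    have h2 := (Real.hasDerivAt_exp (-2*lam*x)).comp x h1
    have h3 := (h2.neg).div_const (2*lam)
    refine h3.congr_deriv ?_
    rw [div_eq_iff (by positivity)]; ring
  have hcont : Continuous fun s : ℝ => Real.exp (-2*lam*s) := by
    exact Real.continuous_exp.comp (by continuity)
  rw [intervalIntegral.integral_eq_sub_of_hasDerivAt (fun x _ => hd x)
      (hcont.intervalIntegrable a b)]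
  field_simp
  ring

lemma aux_I (h : ℝ) (hh : 0 < h) (lam : ℝ) (hlam : 0 < lam) :
    ∫ s in (0:ℝ)..h, (Real.exp (-2 * lam * s) - Real.exp (-2 * lam * h))
      = (1 - Real.exp (-2*lam*h)) / (2*lam) - h * Real.exp (-2*lam*h) := by
  have hcont : Continuous fun s : ℝ => Real.exp (-2*lam*s) := by
    exact Real.continuous_exp.comp (by continuity)
  rw [intervalIntegral.integral_sub (hcont.intervalIntegrable 0 h)
      (intervalIntegrable_const), aux_anti lam hlam, intervalIntegral.integral_const]
  simp [Real.exp_zero, smul_eq_mul]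

lemma aux_congr (h : ℝ) (hh : 0 < h) (lam : ℝ) (k : ℕ) :
    ∀ s ∈ Set.uIoc ((k:ℝ)*h) (((k:ℝ)+1)*h),
      (Real.exp (-2 * lam * s) - Real.exp (-2 * lam * (h * (⌈s / h⌉ : ℝ))))
        = (Real.exp (-2 * lam * s) - Real.exp (-2 * lam * (((k:ℝ)+1)*h))) := by
  intro s hs
  rw [Set.uIoc_of_le (by nlinarith : (k:ℝ)*h ≤ ((k:ℝ)+1)*h)] at hs
  have hceil : ⌈s / h⌉ = (k:ℤ) + 1 := by
    rw [Int.ceil_eq_iff]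
    constructor
    · push_cast
      rw [lt_div_iff₀ hh]
      simpa using hs.1
    · push_cast
      rw [div_le_iff₀ hh]
      exact hs.2
  rw [hceil]
  push_cast
  ring_nf

lemma aux_piece (h : ℝ) (hh : 0 < h) (lam : ℝ) (hlam : 0 < lam) (k : ℕ) :
    ∫ s in ((k:ℝ)*h)..(((k:ℝ)+1)*h),
        (Real.exp (-2 * lam * s) - Real.exp (-2 * lam * (h * (⌈s / h⌉ : ℝ))))
      = Real.exp (-2*lam*h) ^ k
        * ∫ s in (0:ℝ)..h, (Real.exp (-2 * lam * s) - Real.exp (-2 * lam * h)) := by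
  have hcont : Continuous fun s : ℝ => Real.exp (-2*lam*s) := by
    exact Real.continuous_exp.comp (by continuity)
  rw [intervalIntegral.integral_congr_ae
      (Filter.Eventually.of_forall (aux_congr h hh lam k))]
  rw [intervalIntegral.integral_sub (hcont.intervalIntegrable _ _)
      intervalIntegrable_const, aux_anti lam hlam, intervalIntegral.integral_const,
      aux_I h hh lam hlam]
  have e1 : Real.exp (-2*lam*(((k:ℝ)+1)*h))
      = Real.exp (-2*lam*((k:ℝ)*h)) * Real.exp (-2*lam*h) := by
    rw [← Real.exp_add]; ring_nf
  have e2 : Real.exp (-2*lam*h) ^ k = Real.exp (-2*lam*((k:ℝ)*h)) := by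
    rw [← Real.exp_nat_mul]; ring_nf
  rw [e1, e2, smul_eq_mul]
  field_simp
  ring

/-- For `h ∈ (0,∞)`, `N ≥ 1`, `T = N·h`, `λ ∈ (0,∞)`:
`∫_0^T (e^{-2λs} - e^{-2λ⌈s⌉_h}) ds
  = ((1-e^{-2λT})/(1-e^{-2λh})) · ∫_0^h (e^{-2λs} - e^{-2λh}) ds`,
where `⌈s⌉_h = h·⌈s/h⌉`. -/
theorem stmt_1 (h : ℝ) (hh : 0 < h) (N : ℕ) (hN : 1 ≤ N) (T : ℝ) (hT : T = N * h)
    (lam : ℝ) (hlam : 0 < lam) :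
    ∫ s in (0:ℝ)..T,
        (Real.exp (-2 * lam * s) - Real.exp (-2 * lam * (h * (⌈s / h⌉ : ℝ))))
      = ((1 - Real.exp (-2 * lam * T)) / (1 - Real.exp (-2 * lam * h)))
        * ∫ s in (0:ℝ)..h, (Real.exp (-2 * lam * s) - Real.exp (-2 * lam * h)) := by
  set F := fun s : ℝ =>
    Real.exp (-2 * lam * s) - Real.exp (-2 * lam * (h * (⌈s / h⌉ : ℝ))) with hF
  have hcont : ∀ c : ℝ, Continuous fun s : ℝ => Real.exp (-2*lam*s) - Real.exp c := by
    intro c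
    exact (Real.continuous_exp.comp (by continuity)).sub continuous_const
  have hint : ∀ k : ℕ, IntervalIntegrable F volume ((k:ℝ)*h) (((k:ℝ)+1)*h) := by
    intro k
    refine ((hcont (-2*lam*(((k:ℝ)+1)*h))).intervalIntegrable _ _).congr ?_
    exact
      fun s hs => (aux_congr h hh lam k s hs).symm
  have hsum := intervalIntegral.sum_integral_adjacent_intervals
      (a := fun k : ℕ => (k:ℝ)*h) (μ := volume) (f := F) (n := N)
      (fun k _ => by push_cast; exact hint k)
  simp only [Nat.cast_zero, zero_mul, Nat.cast_add, Nat.cast_one] at hsum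
  rw [hT, ← hsum]
  have hr1 : Real.exp (-2*lam*h) ≠ 1 := by
    have : Real.exp (-2*lam*h) < 1 := Real.exp_lt_one_iff.mpr (by nlinarith)
    linarith
  have hrN : Real.exp (-2*lam*h) ^ N = Real.exp (-2 * lam * ((N:ℝ)*h)) := by
    rw [← Real.exp_nat_mul]; ring_nf
  calc ∑ k ∈ Finset.range N, ∫ s in ((k:ℝ)*h)..((k:ℝ)+1)*h, F s
      = ∑ k ∈ Finset.range N, Real.exp (-2*lam*h) ^ k
          * ∫ s in (0:ℝ)..h, (Real.exp (-2 * lam * s) - Real.exp (-2 * lam * h)) := by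
        refine Finset.sum_congr rfl fun k _ => ?_
        exact aux_piece h hh lam hlam k
    _ = (∑ k ∈ Finset.range N, Real.exp (-2*lam*h) ^ k)
          * ∫ s in (0:ℝ)..h, (Real.exp (-2 * lam * s) - Real.exp (-2 * lam * h)) := by
        rw [Finset.sum_mul]
    _ = ((1 - Real.exp (-2 * lam * ((N:ℝ)*h))) / (1 - Real.exp (-2 * lam * h)))
          * ∫ s in (0:ℝ)..h, (Real.exp (-2 * lam * s) - Real.exp (-2 * lam * h)) := by
        rw [geom_sum_eq hr1, hrN]
        congr 1
        rw [div_eq_div_iff (by intro hc; exact hr1 (by linarith)) (by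
          intro hc; exact hr1 (by linarith))]
        ring
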